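/- Let N ≥ 2 and define Q = { q ∈ [0,1]^{N+1} : q_{j-1} ≥ ((j-1)/j) q_j, j = 1,...,N }. Let q ∈ Q and suppose there exists k ∈ {0,...,N−1} with q_k > (k/(k+1)) q_{k+1} and q_{k+1} < 1. Let π_0,...,π_N > 0 and 0 ≤ v_0 < ... < v_N. Then there exists q̃ ∈ Q with Σ_j π_j q̃_j = Σ_j π_j q_j and Σ_j π_j q̃_j v_j > Σ_j π_j q_j v_j. -/

import Mathlib

set_option maxHeartbeats 1000000 in
/-- Pareto perturbation. If q ∈ Q has a slack constraint at k with
q_{k+1} < 1, then there is q̃ ∈ Q with the same π-expected buying probability and a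
strictly higher π-expected consumption utility. -/
theorem stmt10 (N : ℕ) (hN : 2 ≤ N) (P v q : ℕ → ℝ)
    (hP : ∀ j ≤ N, 0 < P j)
    (hv0 : 0 ≤ v 0) (hv : ∀ j < N, v j < v (j + 1))
    (hq01 : ∀ j ≤ N, 0 ≤ q j ∧ q j ≤ 1)
    (hchain : ∀ j, 1 ≤ j → j ≤ N → q (j - 1) ≥ (((j : ℝ) - 1) / (j : ℝ)) * q j)
    (k : ℕ) (hk : k ≤ N - 1)
    (hgap : q k > ((k : ℝ) / ((k : ℝ) + 1)) * q (k + 1)) (hlt : q (k + 1) < 1) :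
    ∃ qt : ℕ → ℝ,
      (∀ j ≤ N, 0 ≤ qt j ∧ qt j ≤ 1) ∧
      (∀ j, 1 ≤ j → j ≤ N → qt (j - 1) ≥ (((j : ℝ) - 1) / (j : ℝ)) * qt j) ∧
      (∑ j ∈ Finset.range (N + 1), P j * qt j = ∑ j ∈ Finset.range (N + 1), P j * q j) ∧
      (∑ j ∈ Finset.range (N + 1), P j * qt j * v j >
        ∑ j ∈ Finset.range (N + 1), P j * q j * v j) := by
  have hkN1 : k + 1 ≤ N := by omega
  have hkN : k ≤ N := by omega
  have hPk := hP k hkN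
  have hPk1 := hP (k+1) hkN1
  set c : ℝ := P (k+1) / P k with hc
  have hc0 : 0 < c := div_pos hPk1 hPk
  have hPkc : P k * c = P (k+1) := by rw [hc]; field_simp [hPk.ne']
  have hfrac0 : 0 ≤ (k:ℝ) / ((k:ℝ) + 1) := by positivity
  have hfrac1 : (k:ℝ) / ((k:ℝ) + 1) ≤ 1 := by
    rw [div_le_one (by positivity)]; linarith
  have hg : 0 < q k - ((k:ℝ)/((k:ℝ)+1)) * q (k+1) := by linarith
  set ε : ℝ := min (1 - q (k+1)) ((q k - ((k:ℝ)/((k:ℝ)+1)) * q (k+1)) / (c + 1)) with hε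
  have hε0 : 0 < ε := lt_min (by linarith) (div_pos hg (by linarith))
  have hε1 : ε ≤ 1 - q (k+1) := min_le_left _ _
  have hε2 : ε * (c + 1) ≤ q k - ((k:ℝ)/((k:ℝ)+1)) * q (k+1) := by
    have h := min_le_right (1 - q (k+1)) ((q k - ((k:ℝ)/((k:ℝ)+1)) * q (k+1)) / (c + 1))
    rw [← hε] at h
    exact (le_div_iff₀ (by linarith)).mp h
  set qt : ℕ → ℝ := fun j => if j = k then q k - ε * c else if j = k + 1 then q (k+1) + ε else q j with hqt
  have hqtk : qt k = q k - ε * c := by simp [hqt]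
  have hqtk1 : qt (k+1) = q (k+1) + ε := by simp [hqt, (by omega : ¬ (k+1 = k))]
  have hqtother : ∀ j, j ≠ k → j ≠ k+1 → qt j = q j := by
    intro j h1 h2; simp [hqt, h1, h2]
  -- key slack inequality
  have qslack : q k - ε * c ≥ ((k:ℝ)/((k:ℝ)+1)) * (q (k+1) + ε) := by
    have h1 : ((k:ℝ)/((k:ℝ)+1)) * ε ≤ ε := by nlinarith
    nlinarith
  have hqk10 : 0 ≤ q (k+1) := (hq01 (k+1) hkN1).1
  have hqtk0 : 0 ≤ qt k := by
    rw [hqtk]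
    have : 0 ≤ ((k:ℝ)/((k:ℝ)+1)) * (q (k+1) + ε) := by positivity
    linarith
  refine ⟨qt, ?_, ?_, ?_, ?_⟩
  · intro j hj
    by_cases h1 : j = k
    · rw [h1, hqtk]
      have h := (hq01 k hkN).2
      refine ⟨by rw [← hqtk]; exact hqtk0, by nlinarith⟩
    · by_cases h2 : j = k+1
      · rw [h2, hqtk1]
        constructor <;> linarith
      · rw [hqtother j h1 h2]; exact hq01 j hj
  · intro j hj1 hjN
    have hcoef0 : 0 ≤ ((j:ℝ) - 1) / (j:ℝ) := by
      apply div_nonneg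
      · have : (1:ℝ) ≤ (j:ℝ) := by exact_mod_cast hj1
        linarith
      · positivity
    by_cases h1 : j = k + 1
    · rw [h1] at hcoef0 ⊢
      have : (k + 1 : ℕ) - 1 = k := by omega
      rw [this, hqtk, hqtk1]
      have hcast : ((↑(k+1) : ℝ) - 1) / (↑(k+1) : ℝ) = (k:ℝ) / ((k:ℝ) + 1) := by
        push_cast; ring_nf
      rw [hcast]
      exact qslack
    · by_cases h2 : j = k
      · rw [h2] at hj1 hjN hcoef0 ⊢
        have hk1 : 1 ≤ k := hj1
        have hkm : k - 1 ≠ k := by omega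
        have hkm1 : k - 1 ≠ k + 1 := by omega
        rw [hqtother _ hkm hkm1, hqtk]
        have hch := hchain k hj1 hjN
        have hle : q k - ε * c ≤ q k := by nlinarith
        calc (((k:ℝ) - 1) / (k:ℝ)) * (q k - ε * c) ≤ (((k:ℝ) - 1) / (k:ℝ)) * q k :=
              mul_le_mul_of_nonneg_left hle hcoef0
          _ ≤ q (k - 1) := hch
      · by_cases h3 : j = k + 2
        · rw [h3] at hjN ⊢
          have : (k + 2 : ℕ) - 1 = k + 1 := by omega
          rw [this, hqtk1, hqtother (k+2) (by omega) (by omega)]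
          have hch := hchain (k+2) (by omega) hjN
          have : (k + 2 : ℕ) - 1 = k + 1 := by omega
          rw [this] at hch
          linarith
        · rw [hqtother (j-1) (by omega) (by omega), hqtother j h2 h1]
          exact hchain j hj1 hjN
  · -- sum preservation
    have key : ∀ w : ℕ → ℝ, ∑ j ∈ Finset.range (N+1), w j * qt j =
        ∑ j ∈ Finset.range (N+1), w j * q j + (w (k+1) * ε - w k * (ε * c)) := by
      intro w
      have hpt : ∀ j, w j * qt j = w j * q j +
          ((if j = k then -(w k * (ε * c)) else 0) + (if j = k+1 then w (k+1) * ε else 0)) := by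
        intro j
        by_cases h1 : j = k
        · rw [h1, hqtk]; simp [(by omega : k ≠ k + 1)]; ring
        · by_cases h2 : j = k+1
          · rw [h2, hqtk1]; simp [(by omega : k + 1 ≠ k)]; ring
          · simp [hqtother j h1 h2, h1, h2]
      rw [Finset.sum_congr rfl (fun j _ => hpt j), Finset.sum_add_distrib,
        Finset.sum_add_distrib, Finset.sum_ite_eq' (Finset.range (N+1)) k,
        Finset.sum_ite_eq' (Finset.range (N+1)) (k+1)]
      simp only [Finset.mem_range]
      rw [if_pos (by omega), if_pos (by omega)]
      ring
    rw [key P]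
    have h4 : P k * (ε * c) = P (k + 1) * ε := by rw [← hPkc]; ring
    rw [h4]; ring
  · have key : ∀ w : ℕ → ℝ, ∑ j ∈ Finset.range (N+1), w j * qt j =
        ∑ j ∈ Finset.range (N+1), w j * q j + (w (k+1) * ε - w k * (ε * c)) := by
      intro w
      have hpt : ∀ j, w j * qt j = w j * q j +
          ((if j = k then -(w k * (ε * c)) else 0) + (if j = k+1 then w (k+1) * ε else 0)) := by
        intro j
        by_cases h1 : j = k
        · rw [h1, hqtk]; simp [(by omega : k ≠ k + 1)]; ring
        · by_cases h2 : j = k+1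
          · rw [h2, hqtk1]; simp [(by omega : k + 1 ≠ k)]; ring
          · simp [hqtother j h1 h2, h1, h2]
      rw [Finset.sum_congr rfl (fun j _ => hpt j), Finset.sum_add_distrib,
        Finset.sum_add_distrib, Finset.sum_ite_eq' (Finset.range (N+1)) k,
        Finset.sum_ite_eq' (Finset.range (N+1)) (k+1)]
      simp only [Finset.mem_range]
      rw [if_pos (by omega), if_pos (by omega)]
      ring
    have e1 : ∑ j ∈ Finset.range (N+1), P j * qt j * v j =
        ∑ j ∈ Finset.range (N+1), (P j * v j) * qt j :=
      Finset.sum_congr rfl (fun j _ => by ring)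
    have e2 : ∑ j ∈ Finset.range (N+1), P j * q j * v j =
        ∑ j ∈ Finset.range (N+1), (P j * v j) * q j :=
      Finset.sum_congr rfl (fun j _ => by ring)
    rw [e1, e2, key (fun j => P j * v j)]
    have hvk : v k < v (k+1) := hv k (by omega)
    have hvnn : ∀ j, j ≤ N → 0 ≤ v j := by
      intro j hj
      induction j with
      | zero => exact hv0
      | succ n ih =>
        have h := hv n (by omega)
        have := ih (by omega)
        linarith
    have hvk0 : 0 ≤ v k := hvnn k hkN
    have h1 : P k * v k * (ε * c) = P (k+1) * v k * ε := by
      calc P k * v k * (ε * c) = (P k * c) * v k * ε := by ring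
        _ = P (k+1) * v k * ε := by rw [hPkc]
    have h2 : 0 < P (k+1) * ε * (v (k+1) - v k) :=
      mul_pos (mul_pos hPk1 hε0) (by linarith)
    have h3 : 0 < P (k+1) * v (k+1) * ε - P k * v k * (ε * c) := by
      rw [h1]; linarith [h2]
    linarith
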